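/- For any additive subsemigroup Δ ⊂ ℤⁿ and any r ≥ 1, the subspace I^{(r)}_Δ = ⊕_{a₁,...,a_r ∈ Δ} C_{a₁+...+a_r} is an ideal of the algebra C_Δ = ⊕_{a∈Δ} C_a with respect to both the cup product and the Gerstenhaber bracket. -/

import Mathlib

open Finset

namespace Gerst

/-- A `p`-cochain of the algebra `A`: a map `A^p → A`. -/
abbrev Cochain (A : Type*) (p : ℕ) := (Fin p → A) → A

variable {A : Type*} [CommRing A]

/-- The cup product of cochains. -/
def cup {p q : ℕ} (φ : Cochain A p) (ψ : Cochain A q) : Cochain A (p + q) :=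
  fun u => φ (fun i => u (Fin.castAdd q i)) * ψ (fun i => u (Fin.natAdd p i))

/-- Insert the value of `ψ` at position `k` among the arguments of a `p`-cochain. -/
def insertArg {p q : ℕ} (ψ : Cochain A q) (k : Fin p) (u : Fin (p + q - 1) → A) :
    Fin p → A :=
  fun i =>
    if _h : i.val < k.val then u ⟨i.val, by have := i.isLt; have := k.isLt; omega⟩
    else if _h2 : i.val = k.val then
      ψ (fun j => u ⟨k.val + j.val, by have := j.isLt; have := k.isLt; omega⟩)
    else u ⟨i.val + q - 1, by have := i.isLt; have := k.isLt; omega⟩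

/-- `(-1)^m` for an integer exponent `m`. -/
def sgn (m : ℤ) : ℤ := ((-1 : ℤˣ) ^ m : ℤˣ)

/-- The Gerstenhaber circle (composition) product. -/
def circ {p q : ℕ} (φ : Cochain A p) (ψ : Cochain A q) : Cochain A (p + q - 1) :=
  fun u => ∑ k : Fin p, sgn ((k.val : ℤ) * ((q : ℤ) - 1)) • φ (insertArg ψ k u)

/-- The Gerstenhaber bracket. -/
def bracket {p q : ℕ} (φ : Cochain A p) (ψ : Cochain A q) : Cochain A (p + q - 1) :=
  fun u => circ φ ψ u -
    sgn (((p : ℤ) - 1) * ((q : ℤ) - 1)) •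
      circ ψ φ (fun i => u (Fin.cast (by omega) i))

/-- The multiplication of `A` as a 2-cochain. -/
def mulC : Cochain A 2 := fun u => u 0 * u 1

/-- The Hochschild coboundary operator. -/
def hdelta {p : ℕ} (φ : Cochain A p) : Cochain A (p + 1) :=
  fun u => u 0 * φ (fun i => u i.succ)
    + ∑ k : Fin p, ((-1 : ℤ) ^ (k.val + 1)) •
        φ (fun i =>
          if i.val < k.val then u ⟨i.val, by have := i.isLt; omega⟩
          else if i.val = k.val then
            u ⟨k.val, by have := k.isLt; omega⟩ * u ⟨k.val + 1, by have := k.isLt; omega⟩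
          else u ⟨i.val + 1, by have := i.isLt; omega⟩)
    + ((-1 : ℤ) ^ (p + 1)) • (φ (fun i => u i.castSucc) * u (Fin.last p))

/-- The iterated partial derivative `∂^a` on `ℝ[x₁,…,xₙ]`. -/
noncomputable def Dpow {n : ℕ} (a : Fin n → ℕ) :
    Module.End ℝ (MvPolynomial (Fin n) ℝ) :=
  ((List.finRange n).map
    (fun i => ((MvPolynomial.pderiv i).toLinearMap) ^ (a i))).prod

/-- The elementary cochain `x^{a₀} ∂^{a₁} ⊗ ⋯ ⊗ ∂^{a_p}`. -/
noncomputable def elem {n p : ℕ} (a₀ : Fin n → ℕ) (as : Fin p → Fin n → ℕ) :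
    Cochain (MvPolynomial (Fin n) ℝ) p :=
  fun u => MvPolynomial.monomial (Finsupp.equivFunOnFinite.symm a₀) (1 : ℝ) *
    ∏ s : Fin p, Dpow (as s) (u s)

/-- The weight `a₀ - ∑ₛ aₛ ∈ ℤⁿ` of an elementary cochain. -/
def wt {n p : ℕ} (a₀ : Fin n → ℕ) (as : Fin p → Fin n → ℕ) : Fin n → ℤ :=
  fun i => (a₀ i : ℤ) - ∑ s : Fin p, (as s i : ℤ)

/-- The total degree `a₀ + ∑ₛ aₛ` of an elementary cochain. -/
def swt {n p : ℕ} (a₀ : Fin n → ℕ) (as : Fin p → Fin n → ℕ) : Fin n → ℤ :=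
  fun i => (a₀ i : ℤ) + ∑ s : Fin p, (as s i : ℤ)

/-- The weight space `C_a`. -/
noncomputable def WS (n p : ℕ) (a : Fin n → ℤ) :
    Submodule ℝ (Cochain (MvPolynomial (Fin n) ℝ) p) :=
  Submodule.span ℝ {φ | ∃ a₀ as, wt a₀ as = a ∧ φ = elem a₀ as}

/-- `C_Δ = ⊕_{a ∈ Δ} C_a`. -/
noncomputable def CD (n p : ℕ) (Δ : Set (Fin n → ℤ)) :
    Submodule ℝ (Cochain (MvPolynomial (Fin n) ℝ) p) :=
  Submodule.span ℝ {φ | ∃ a₀ as, wt a₀ as ∈ Δ ∧ φ = elem a₀ as}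

/-- The Euler vector field `hⁱ = xᵢ ∂ᵢ` as a 1-cochain. -/
noncomputable def hV {n : ℕ} (i : Fin n) : Cochain (MvPolynomial (Fin n) ℝ) 1 :=
  fun u => MvPolynomial.X i * MvPolynomial.pderiv i (u 0)


/-- The `r`-fold iterated sumset of a set `Δ`. -/
def iterSum {n : ℕ} (Δ : Set (Fin n → ℤ)) (r : ℕ) : Set (Fin n → ℤ) :=
  {x | ∃ f : Fin r → (Fin n → ℤ), (∀ i, f i ∈ Δ) ∧ x = ∑ i, f i}

section Aux
open MvPolynomial
variable {n : ℕ}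

local notation "R" => MvPolynomial (Fin n) ℝ

lemma pderiv_comm' (i j : Fin n) (f : R) :
    pderiv i (pderiv j f) = pderiv j (pderiv i f) := by
  induction f using MvPolynomial.induction_on' with
  | monomial s a =>
    rcases eq_or_ne i j with rfl | hij
    · rfl
    · simp only [pderiv_monomial]
      have h1 : ((s - Finsupp.single j 1 : Fin n →₀ ℕ)) i = s i := by
        simp [Finsupp.coe_tsub, Pi.sub_apply, Finsupp.single_apply, hij.symm]
      have h2 : ((s - Finsupp.single i 1 : Fin n →₀ ℕ)) j = s j := by
        simp [Finsupp.coe_tsub, Pi.sub_apply, Finsupp.single_apply, hij]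
      have h3 : s - Finsupp.single j 1 - Finsupp.single i 1
          = s - Finsupp.single i 1 - Finsupp.single j 1 := by
        ext t; simp only [Finsupp.coe_tsub, Pi.sub_apply, Finsupp.single_apply]; split_ifs <;> omega
      rw [h1, h2, h3]; ring_nf
  | add p q hp hq => simp [map_add, hp, hq]

lemma commute_pderiv (i j : Fin n) :
    Commute ((pderiv i).toLinearMap : Module.End ℝ R) (pderiv j).toLinearMap := by
  apply LinearMap.ext
  intro f
  simp only [Module.End.mul_apply, Derivation.coeFn_coe]
  exact pderiv_comm' i j f

lemma commute_pderiv_pow (i j : Fin n) (a b : ℕ) :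
    Commute (((pderiv i).toLinearMap : Module.End ℝ R) ^ a) ((pderiv j).toLinearMap ^ b) :=
  (commute_pderiv i j).pow_pow a b

lemma list_step (i : Fin n) (c : Fin n → ℕ) :
    ∀ L : List (Fin n), i ∈ L → L.Nodup →
      ((pderiv i).toLinearMap : Module.End ℝ R) *
        (L.map (fun j => ((pderiv j).toLinearMap : Module.End ℝ R) ^ (c j))).prod =
      (L.map (fun j => ((pderiv j).toLinearMap : Module.End ℝ R) ^
        (Function.update c i (c i + 1) j))).prod := by
  intro L
  induction L with
  | nil => intro h; simp at h
  | cons a L ih =>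
    intro hmem hnd
    rcases List.mem_cons.mp hmem with rfl | hmem'
    · have hnot : i ∉ L := (List.nodup_cons.mp hnd).1
      simp only [List.map_cons, List.prod_cons, ← mul_assoc]
      have h1 : ((pderiv i).toLinearMap : Module.End ℝ R) * (pderiv i).toLinearMap ^ (c i)
          = (pderiv i).toLinearMap ^ (Function.update c i (c i + 1) i) := by
        rw [Function.update_self, pow_succ']
      rw [h1]
      refine congrArg _ (congrArg List.prod (List.map_congr_left fun j hj => ?_))
      have hji : j ≠ i := fun h => hnot (h ▸ hj)
      rw [Function.update_of_ne hji]
    · have hne : i ≠ a := by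
        rintro rfl; exact (List.nodup_cons.mp hnd).1 hmem'
      have hc : Commute ((pderiv i).toLinearMap : Module.End ℝ R)
          ((pderiv a).toLinearMap ^ (c a)) := (commute_pderiv i a).pow_right (c a)
      simp only [List.map_cons, List.prod_cons]
      rw [← mul_assoc, hc.eq, mul_assoc, ih hmem' (List.nodup_cons.mp hnd).2,
        Function.update_of_ne hne.symm]

/-- Applying one more `pderiv i` computes `Dpow` at an incremented exponent. -/
lemma Dpow_update_apply (i : Fin n) (c : Fin n → ℕ) (x : R) :
    Dpow (Function.update c i (c i + 1)) x = pderiv i (Dpow c x) := by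
  have h := list_step i c (List.finRange n) (List.mem_finRange i) (List.nodup_finRange n)
  have : Dpow (Function.update c i (c i + 1)) = ((pderiv i).toLinearMap : Module.End ℝ R) * Dpow c := by
    rw [Dpow, Dpow, ← h]
  rw [this]
  rfl

lemma Dpow_zero' (c : Fin n → ℕ) (hc : ∀ i, c i = 0) (x : R) : Dpow c x = x := by
  have : Dpow (n := n) c = 1 := by
    rw [Dpow]
    apply List.prod_eq_one
    intro y hy
    rcases List.mem_map.mp hy with ⟨i, _, rfl⟩
    rw [hc i, pow_zero]
  rw [this]; rfl
end Aux
section Aux2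
open MvPolynomial
variable {n : ℕ}
local notation "R" => MvPolynomial (Fin n) ℝ

lemma symm_add (a b : Fin n → ℕ) :
    (Finsupp.equivFunOnFinite.symm (a + b) : Fin n →₀ ℕ)
      = Finsupp.equivFunOnFinite.symm a + Finsupp.equivFunOnFinite.symm b := by
  ext i; rfl

lemma pderiv_prod (i : Fin n) {ι : Type*} [DecidableEq ι] (s : Finset ι) (f : ι → R) :
    pderiv i (∏ t ∈ s, f t) = ∑ t ∈ s, pderiv i (f t) * ∏ t' ∈ s.erase t, f t' := by
  induction s using Finset.induction_on with
  | empty => simp [pderiv_one]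
  | @insert a s ha ih =>
    rw [Finset.prod_insert ha, pderiv_mul, ih, Finset.sum_insert ha, Finset.erase_insert ha,
      Finset.mul_sum]
    congr 1
    apply Finset.sum_congr rfl
    intro t ht
    have hat : a ≠ t := fun h => ha (h ▸ ht)
    rw [Finset.erase_insert_of_ne hat, Finset.prod_insert (fun h => ha (Finset.mem_of_mem_erase h))]
    ring

lemma elem_apply (p : ℕ) (a₀ : Fin n → ℕ) (as : Fin p → Fin n → ℕ) (u : Fin p → R) :
    elem a₀ as u = monomial (Finsupp.equivFunOnFinite.symm a₀) (1 : ℝ) *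
      ∏ s : Fin p, Dpow (as s) (u s) := rfl

lemma mem_WS_of_gen {p : ℕ} {w : Fin n → ℤ} (a₀ : Fin n → ℕ) (as : Fin p → Fin n → ℕ)
    (h : wt a₀ as = w) : elem a₀ as ∈ WS n p w :=
  Submodule.subset_span ⟨a₀, as, h, rfl⟩

lemma pderiv_comp_elem (i : Fin n) {q : ℕ} (b₀ : Fin n → ℕ) (bs : Fin q → Fin n → ℕ) :
    (fun v => pderiv i (elem b₀ bs v)) ∈ WS n q (wt b₀ bs - Pi.single i 1) := by
  classical
  set X : Fin q → Fin n → ℕ := fun t => Function.update (bs t) i (bs t i + 1) with hX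
  have key : (fun v : Fin q → R => pderiv i (elem b₀ bs v))
      = (b₀ i : ℝ) • elem (Function.update b₀ i (b₀ i - 1)) bs
        + ∑ t : Fin q, elem b₀ (Function.update bs t (X t)) := by
    funext v
    rw [elem_apply, pderiv_mul, pderiv_monomial, pderiv_prod]
    have e1 : monomial ((Finsupp.equivFunOnFinite.symm b₀ : Fin n →₀ ℕ) - Finsupp.single i 1)
          ((1:ℝ) * ((Finsupp.equivFunOnFinite.symm b₀ : Fin n →₀ ℕ) i))
        = (b₀ i : ℝ) • monomial
            (Finsupp.equivFunOnFinite.symm (Function.update b₀ i (b₀ i - 1))) (1:ℝ) := by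
      rw [smul_monomial]
      have hB : (Finsupp.equivFunOnFinite.symm b₀ : Fin n →₀ ℕ) - Finsupp.single i 1
          = Finsupp.equivFunOnFinite.symm (Function.update b₀ i (b₀ i - 1)) := by
        ext j
        simp only [Finsupp.coe_tsub, Pi.sub_apply, Finsupp.single_apply,
          Finsupp.equivFunOnFinite, Equiv.coe_fn_symm_mk, Function.update_apply]
        by_cases hj : j = i
        · subst hj; simp
        · simp [hj, Ne.symm hj]
      rw [hB]
      congr 1
      simp [Finsupp.equivFunOnFinite, smul_eq_mul]
    have e2 : ∀ t : Fin q, monomial (Finsupp.equivFunOnFinite.symm b₀) (1:ℝ) *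
          (pderiv i (Dpow (bs t) (v t)) * ∏ t' ∈ (Finset.univ : Finset (Fin q)).erase t, Dpow (bs t') (v t'))
        = elem b₀ (Function.update bs t (X t)) v := by
      intro t
      rw [elem_apply]
      congr 1
      have : (fun t' => Dpow (Function.update bs t (X t) t') (v t'))
          = Function.update (fun t' => Dpow (bs t') (v t')) t (Dpow (X t) (v t)) := by
        funext t'
        by_cases ht' : t' = t
        · subst ht'; simp
        · simp [Function.update_of_ne ht']
      rw [this, Finset.prod_update_of_mem (Finset.mem_univ t), ← Finset.erase_eq]
      congr 1
      rw [hX]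
      exact (Dpow_update_apply i (bs t) (v t)).symm
    rw [Pi.add_apply, Pi.smul_apply, Finset.sum_apply, Finset.mul_sum]
    rw [e1]
    congr 1
    · simp [elem_apply, Finset.mul_sum, smul_mul_assoc]
    · exact Finset.sum_congr rfl fun t _ => e2 t
  rw [key]
  apply Submodule.add_mem
  · by_cases hb : b₀ i = 0
    · rw [hb]; simp
    · apply Submodule.smul_mem
      apply mem_WS_of_gen
      funext j
      simp only [wt, Pi.sub_apply, Pi.single_apply, Function.update_apply]
      by_cases hj : j = i
      · subst hj; simp; omega
      · simp [hj]
  · apply Submodule.sum_mem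
    intro t _
    apply mem_WS_of_gen
    funext j
    simp only [wt, Pi.sub_apply, Pi.single_apply]
    have hsum : (∑ s : Fin q, ((Function.update bs t (X t) s) j : ℤ))
        = (X t j : ℤ) - bs t j + ∑ s : Fin q, (bs s j : ℤ) := by
      rw [← Finset.add_sum_erase _ _ (Finset.mem_univ t),
        ← Finset.add_sum_erase _ (fun s => ((bs s j : ℤ))) (Finset.mem_univ t)]
      have : ∑ s ∈ Finset.univ.erase t, ((Function.update bs t (X t) s) j : ℤ)
          = ∑ s ∈ Finset.univ.erase t, ((bs s j : ℤ)) :=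
        Finset.sum_congr rfl fun s hs => by
          rw [Function.update_of_ne (Finset.ne_of_mem_erase hs)]
      rw [this, Function.update_self]
      ring
    rw [hsum, hX]
    simp only [Function.update_apply]
    by_cases hj : j = i
    · subst hj; simp; ring
    · simp [hj]

end Aux2
section Aux3
open MvPolynomial
variable {n : ℕ}
local notation "R" => MvPolynomial (Fin n) ℝ

lemma pderiv_comp_mem (i : Fin n) {q : ℕ} {w : Fin n → ℤ} {G : Cochain R q}
    (hG : G ∈ WS n q w) :
    (fun v => pderiv i (G v)) ∈ WS n q (w - Pi.single i 1) := by
  induction hG using Submodule.span_induction with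
  | mem x hx =>
    obtain ⟨b₀, bs, hw, rfl⟩ := hx
    rw [← hw]
    exact pderiv_comp_elem i b₀ bs
  | zero =>
    have : (fun v => pderiv i ((0 : Cochain R q) v)) = 0 := by
      funext v; simp
    rw [this]; exact Submodule.zero_mem _
  | add x y hx hy ihx ihy =>
    have : (fun v => pderiv i ((x + y) v)) = (fun v => pderiv i (x v)) + fun v => pderiv i (y v) := by
      funext v; simp
    rw [this]; exact Submodule.add_mem _ ihx ihy
  | smul c x hx ihx =>
    have : (fun v => pderiv i ((c • x) v)) = c • fun v => pderiv i (x v) := by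
      funext v; simp
    rw [this]; exact Submodule.smul_mem _ c ihx

lemma Dpow_comp_mem_aux : ∀ (N : ℕ) (c : Fin n → ℕ), (∑ i, c i) = N →
    ∀ {q : ℕ} {w : Fin n → ℤ} {G : Cochain R q}, G ∈ WS n q w →
      (fun v => Dpow c (G v)) ∈ WS n q (w - fun j => (c j : ℤ)) := by
  intro N
  induction N with
  | zero =>
    intro c hc q w G hG
    have hzero : ∀ i, c i = 0 := by
      intro i
      have := Finset.sum_eq_zero_iff.mp hc
      exact this i (Finset.mem_univ i)
    have h1 : (fun v => Dpow c (G v)) = G := by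
      funext v; exact Dpow_zero' c hzero (G v)
    have h2 : w - (fun j => ((c j : ℤ))) = w := by
      funext j; simp [hzero j]
    rw [h1, h2]; exact hG
  | succ N ih =>
    intro c hc q w G hG
    have hex : ∃ i, 0 < c i := by
      by_contra h
      push_neg at h
      have : ∀ i ∈ Finset.univ, c i = 0 := fun i _ => Nat.le_zero.mp (h i)
      rw [Finset.sum_eq_zero this] at hc
      omega
    obtain ⟨i, hi⟩ := hex
    set c' : Fin n → ℕ := Function.update c i (c i - 1) with hc'
    have hcc : c = Function.update c' i (c' i + 1) := by
      funext j
      by_cases hj : j = i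
      · subst hj; simp [hc']; omega
      · simp [hc', Function.update_of_ne hj]
    have hsum' : (∑ j, c' j) = N := by
      have : (∑ j, c j) = (∑ j, c' j) + 1 := by
        rw [← Finset.add_sum_erase _ c (Finset.mem_univ i),
          ← Finset.add_sum_erase _ c' (Finset.mem_univ i)]
        have : ∑ j ∈ Finset.univ.erase i, c' j = ∑ j ∈ Finset.univ.erase i, c j :=
          Finset.sum_congr rfl fun j hj => by
            simp [hc', Function.update_of_ne (Finset.ne_of_mem_erase hj)]
        rw [this]
        simp [hc']
        omega
      omega
    have hG' := ih c' hsum' hG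
    have hstep := pderiv_comp_mem i hG'
    have heq : (fun v => Dpow c (G v))
        = fun v => pderiv i ((fun v => Dpow c' (G v)) v) := by
      funext v
      rw [hcc]
      exact Dpow_update_apply i c' (G v)
    have hw : (w - fun j => ((c' j : ℤ))) - Pi.single i 1 = w - fun j => ((c j : ℤ)) := by
      funext j
      simp only [Pi.sub_apply, Pi.single_apply, hc', Function.update_apply]
      by_cases hj : j = i
      · subst hj; simp; omega
      · simp [hj]
    rw [heq, ← hw]
    exact hstep

lemma Dpow_comp_mem (c : Fin n → ℕ) {q : ℕ} {w : Fin n → ℤ} {G : Cochain R q}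
    (hG : G ∈ WS n q w) :
    (fun v => Dpow c (G v)) ∈ WS n q (w - fun j => (c j : ℤ)) :=
  Dpow_comp_mem_aux (∑ i, c i) c rfl hG

end Aux3
section Aux4
open MvPolynomial
variable {n : ℕ}
local notation "R" => MvPolynomial (Fin n) ℝ

lemma monomial_add_split (a₀ b₀ : Fin n → ℕ) :
    monomial (Finsupp.equivFunOnFinite.symm (a₀ + b₀)) (1:ℝ)
      = monomial (Finsupp.equivFunOnFinite.symm a₀) (1:ℝ) *
        monomial (Finsupp.equivFunOnFinite.symm b₀) (1:ℝ) := by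
  rw [monomial_mul, symm_add, one_mul]

lemma wt_append {p q : ℕ} (a₀ b₀ : Fin n → ℕ) (as : Fin p → Fin n → ℕ)
    (bs : Fin q → Fin n → ℕ) :
    wt (a₀ + b₀) (Fin.append as bs) = wt a₀ as + wt b₀ bs := by
  funext i
  simp only [wt, Pi.add_apply, Fin.sum_univ_add, Fin.append_left, Fin.append_right]
  push_cast
  ring

lemma cup_elem {p q : ℕ} (a₀ : Fin n → ℕ) (as : Fin p → Fin n → ℕ) (b₀ : Fin n → ℕ)
    (bs : Fin q → Fin n → ℕ) :
    cup (elem a₀ as) (elem b₀ bs) = elem (a₀ + b₀) (Fin.append as bs) := by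
  funext u
  simp only [cup, elem_apply, Fin.prod_univ_add, Fin.append_left, Fin.append_right,
    monomial_add_split]
  ring

def SlotLin {p : ℕ} (φ : Cochain R p) : Prop :=
  ∀ (u : Fin p → R) (k : Fin p) (c : ℝ) (v w : R),
    φ (Function.update u k (c • v + w))
      = c • φ (Function.update u k v) + φ (Function.update u k w)

lemma prod_update_factor {p : ℕ} (as : Fin p → Fin n → ℕ) (u : Fin p → R) (k : Fin p)
    (x : R) :
    (∏ s : Fin p, Dpow (as s) (Function.update u k x s))
      = Dpow (as k) x * ∏ s ∈ Finset.univ.erase k, Dpow (as s) (u s) := by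
  classical
  have h : (fun s => Dpow (as s) (Function.update u k x s))
      = Function.update (fun s => Dpow (as s) (u s)) k (Dpow (as k) x) := by
    funext s
    by_cases hs : s = k
    · subst hs; simp
    · simp [Function.update_of_ne hs]
  rw [h, Finset.prod_update_of_mem (Finset.mem_univ k), ← Finset.erase_eq]

lemma slotLin_elem {p : ℕ} (a₀ : Fin n → ℕ) (as : Fin p → Fin n → ℕ) :
    SlotLin (elem a₀ as) := by
  intro u k c v w
  simp only [elem_apply, prod_update_factor, map_add, map_smul]
  rw [add_mul, smul_mul_assoc, mul_add, mul_smul_comm]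

lemma slotLin_span {p : ℕ} {S : Set (Cochain R p)}
    (hS : ∀ φ ∈ S, ∃ a₀ as, φ = elem a₀ as) {φ : Cochain R p}
    (h : φ ∈ Submodule.span ℝ S) : SlotLin φ := by
  induction h using Submodule.span_induction with
  | mem x hx =>
    obtain ⟨a₀, as, rfl⟩ := hS x hx
    exact slotLin_elem a₀ as
  | zero => intro u k c v w; simp
  | add x y hx hy ihx ihy =>
    intro u k c v w
    simp only [Pi.add_apply, ihx u k c v w, ihy u k c v w, smul_add]
    ring
  | smul a x hx ihx =>
    intro u k c v w
    simp only [Pi.smul_apply, ihx u k c v w, smul_add, smul_comm a c]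

lemma SlotLin.add_arg {p : ℕ} {φ : Cochain R p} (h : SlotLin φ) (u : Fin p → R) (k : Fin p)
    (v w : R) :
    φ (Function.update u k (v + w)) = φ (Function.update u k v) + φ (Function.update u k w) := by
  have := h u k 1 v w
  simpa using this

lemma SlotLin.smul_arg {p : ℕ} {φ : Cochain R p} (h : SlotLin φ) (u : Fin p → R) (k : Fin p)
    (c : ℝ) (v : R) :
    φ (Function.update u k (c • v)) = c • φ (Function.update u k v) := by
  have h0 : φ (Function.update u k 0) = 0 := by
    have := h u k 1 0 0
    simp only [smul_zero, add_zero, one_smul] at this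
    linear_combination -this
  have := h u k c v 0
  simp only [add_zero, h0] at this
  simpa using this

lemma insertArg_eq_update {p q : ℕ} (ψ ψ' : Cochain R q) (k : Fin p)
    (u : Fin (p + q - 1) → R) :
    insertArg ψ k u = Function.update (insertArg ψ' k u) k
      (ψ (fun j => u ⟨k.val + j.val, by have := j.isLt; have := k.isLt; omega⟩)) := by
  funext s
  rw [Function.update_apply]
  by_cases hs : s = k
  · subst hs
    simp [insertArg]
  · rw [if_neg hs]
    have hv : ¬ s.val = k.val := fun hh => hs (Fin.ext hh)
    by_cases h1 : s.val < k.val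
    · simp [insertArg, h1]
    · simp [insertArg, h1, hv]

end Aux4
section Aux5
open MvPolynomial
variable {n : ℕ}
local notation "R" => MvPolynomial (Fin n) ℝ

def spliceIdx {p q : ℕ} (k : Fin p) (as : Fin p → Fin n → ℕ) (bs : Fin q → Fin n → ℕ) :
    Fin (p + q - 1) → Fin n → ℕ :=
  fun j =>
    if _h : j.val < k.val then as ⟨j.val, by have := k.isLt; omega⟩
    else if _h2 : j.val < k.val + q then bs ⟨j.val - k.val, by omega⟩
    else as ⟨j.val - q + 1, by have := j.isLt; have := k.isLt; omega⟩

lemma prod_fin_eq_range' {M : Type*} [CommMonoid M] {m : ℕ} (g : Fin m → M) :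
    ∏ j : Fin m, g j = ∏ j ∈ Finset.range m, (if h : j < m then g ⟨j, h⟩ else 1) := by
  rw [← Fin.prod_univ_eq_prod_range (fun j => if h : j < m then g ⟨j, h⟩ else 1) m]
  exact Finset.prod_congr rfl fun s _ => by simp [s.isLt]

lemma sum_fin_eq_range' {M : Type*} [AddCommMonoid M] {m : ℕ} (g : Fin m → M) :
    ∑ j : Fin m, g j = ∑ j ∈ Finset.range m, (if h : j < m then g ⟨j, h⟩ else 0) := by
  rw [← Fin.sum_univ_eq_sum_range (fun j => if h : j < m then g ⟨j, h⟩ else 0) m]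
  exact Finset.sum_congr rfl fun s _ => by simp [s.isLt]

lemma range_split3 {M : Type*} [CommMonoid M] (a b c : ℕ) (G : ℕ → M) :
    ∏ j ∈ Finset.range (a + b + c), G j
      = ((∏ j ∈ Finset.range a, G j) * ∏ j ∈ Finset.range b, G (a + j)) *
        ∏ j ∈ Finset.range c, G (a + b + j) := by
  rw [Finset.prod_range_add, Finset.prod_range_add]

lemma range_split3_sum {M : Type*} [AddCommMonoid M] (a b c : ℕ) (G : ℕ → M) :
    ∑ j ∈ Finset.range (a + b + c), G j
      = ((∑ j ∈ Finset.range a, G j) + ∑ j ∈ Finset.range b, G (a + j)) +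
        ∑ j ∈ Finset.range c, G (a + b + j) := by
  rw [Finset.sum_range_add, Finset.sum_range_add]

lemma Dpow_congr {c c' : Fin n → ℕ} {x x' : R} (h1 : c = c') (h2 : x = x') :
    Dpow c x = Dpow c' x' := by rw [h1, h2]

lemma wt_splice {p q : ℕ} (k : Fin p) (a₀ b₀ : Fin n → ℕ) (as : Fin p → Fin n → ℕ)
    (bs : Fin q → Fin n → ℕ) :
    wt (a₀ + b₀) (spliceIdx k as bs)
      = wt a₀ as + wt b₀ bs + fun i => (as k i : ℤ) := by
  have hk := k.isLt
  funext i
  simp only [wt, Pi.add_apply]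
  rw [sum_fin_eq_range' (fun j => ((spliceIdx k as bs j i : ℤ))),
    sum_fin_eq_range' (fun s => ((as s i : ℤ))),
    sum_fin_eq_range' (fun t => ((bs t i : ℤ)))]
  have h1 : p + q - 1 = k.val + q + (p - 1 - k.val) := by omega
  have h2 : p = k.val + 1 + (p - 1 - k.val) := by omega
  have hr1 : Finset.range (p + q - 1) = Finset.range (k.val + q + (p - 1 - k.val)) := by rw [← h1]
  have hr2 : Finset.range p = Finset.range (k.val + 1 + (p - 1 - k.val)) := by rw [← h2]
  rw [hr1, range_split3_sum]
  conv_rhs => rw [hr2, range_split3_sum]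
  have e1 : (∑ j ∈ Finset.range k.val,
        (if h : j < p + q - 1 then ((spliceIdx k as bs ⟨j, h⟩ i : ℤ)) else 0))
      = ∑ j ∈ Finset.range k.val, (if h : j < p then ((as ⟨j, h⟩ i : ℤ)) else 0) := by
    apply Finset.sum_congr rfl
    intro j hj
    have hj' := Finset.mem_range.mp hj
    rw [dif_pos (by omega : j < p + q - 1), dif_pos (by omega : j < p)]
    simp only [spliceIdx]
    rw [dif_pos (by omega : j < k.val)]
  have e2 : (∑ j ∈ Finset.range q,
        (if h : k.val + j < p + q - 1 then ((spliceIdx k as bs ⟨k.val + j, h⟩ i : ℤ)) else 0))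
      = ∑ j ∈ Finset.range q, (if h : j < q then ((bs ⟨j, h⟩ i : ℤ)) else 0) := by
    apply Finset.sum_congr rfl
    intro j hj
    have hj' := Finset.mem_range.mp hj
    rw [dif_pos (by omega : k.val + j < p + q - 1), dif_pos (by omega : j < q)]
    simp only [spliceIdx]
    rw [dif_neg (by omega : ¬ k.val + j < k.val), dif_pos (by omega : k.val + j < k.val + q)]
    have hidx : k.val + j - k.val = j := by omega
    simp only [hidx]
  have e3 : (∑ j ∈ Finset.range (p - 1 - k.val),
        (if h : k.val + q + j < p + q - 1 then ((spliceIdx k as bs ⟨k.val + q + j, h⟩ i : ℤ)) else 0))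
      = ∑ j ∈ Finset.range (p - 1 - k.val),
        (if h : k.val + 1 + j < p then ((as ⟨k.val + 1 + j, h⟩ i : ℤ)) else 0) := by
    apply Finset.sum_congr rfl
    intro j hj
    have hj' := Finset.mem_range.mp hj
    rw [dif_pos (by omega : k.val + q + j < p + q - 1), dif_pos (by omega : k.val + 1 + j < p)]
    simp only [spliceIdx]
    rw [dif_neg (by omega : ¬ k.val + q + j < k.val),
      dif_neg (by omega : ¬ k.val + q + j < k.val + q)]
    have hidx : k.val + q + j - q + 1 = k.val + 1 + j := by omega
    simp only [hidx]
  have e4 : (∑ j ∈ Finset.range 1,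
        (if h : k.val + j < p then ((as ⟨k.val + j, h⟩ i : ℤ)) else 0)) = (as k i : ℤ) := by
    rw [Finset.sum_range_one, dif_pos (by omega : k.val + 0 < p)]
    simp
  rw [e1, e2, e3, e4]
  push_cast
  ring

end Aux5
section Aux6
open MvPolynomial
variable {n : ℕ}
local notation "R" => MvPolynomial (Fin n) ℝ

set_option maxHeartbeats 1000000 in
lemma splice_eq {p q : ℕ} (a₀ : Fin n → ℕ) (as : Fin p → Fin n → ℕ) (k : Fin p)
    (b₀ : Fin n → ℕ) (bs : Fin q → Fin n → ℕ) :
    (fun u => elem a₀ (Function.update as k (0 : Fin n → ℕ)) (insertArg (elem b₀ bs) k u))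
      = elem (a₀ + b₀) (spliceIdx k as bs) := by
  have hk := k.isLt
  funext u
  simp only [elem_apply, monomial_add_split]
  rw [prod_fin_eq_range' (fun s => Dpow (Function.update as k (0 : Fin n → ℕ) s)
      (insertArg (elem b₀ bs) k u s)),
    prod_fin_eq_range' (fun j => Dpow (spliceIdx k as bs j) (u j))]
  have h1 : Finset.range (p + q - 1) = Finset.range (k.val + q + (p - 1 - k.val)) := by
    congr 1; omega
  have h2 : Finset.range p = Finset.range (k.val + 1 + (p - 1 - k.val)) := by
    congr 1; omega
  rw [h1, h2, range_split3, range_split3]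
  -- the three pieces
  have e1 : (∏ j ∈ Finset.range k.val, (if h : j < p then
        Dpow (Function.update as k (0 : Fin n → ℕ) ⟨j, h⟩) (insertArg (elem b₀ bs) k u ⟨j, h⟩) else 1))
      = ∏ j ∈ Finset.range k.val, (if h : j < p + q - 1 then
        Dpow (spliceIdx k as bs ⟨j, h⟩) (u ⟨j, h⟩) else 1) := by
    apply Finset.prod_congr rfl
    intro j hj
    have hj' := Finset.mem_range.mp hj
    rw [dif_pos (by omega : j < p), dif_pos (by omega : j < p + q - 1)]
    refine Dpow_congr ?_ ?_
    · rw [Function.update_of_ne (Fin.ne_of_val_ne (show j ≠ k.val by omega))]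
      simp only [spliceIdx]
      rw [dif_pos (by omega : j < k.val)]
    · simp only [insertArg]
      rw [dif_pos (by omega : j < k.val)]
  have e3 : (∏ j ∈ Finset.range (p - 1 - k.val), (if h : k.val + 1 + j < p then
        Dpow (Function.update as k (0 : Fin n → ℕ) ⟨k.val + 1 + j, h⟩)
          (insertArg (elem b₀ bs) k u ⟨k.val + 1 + j, h⟩) else 1))
      = ∏ j ∈ Finset.range (p - 1 - k.val), (if h : k.val + q + j < p + q - 1 then
        Dpow (spliceIdx k as bs ⟨k.val + q + j, h⟩) (u ⟨k.val + q + j, h⟩) else 1) := by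
    apply Finset.prod_congr rfl
    intro j hj
    have hj' := Finset.mem_range.mp hj
    rw [dif_pos (by omega : k.val + 1 + j < p), dif_pos (by omega : k.val + q + j < p + q - 1)]
    refine Dpow_congr ?_ ?_
    · rw [Function.update_of_ne (Fin.ne_of_val_ne (show k.val + 1 + j ≠ k.val by omega))]
      simp only [spliceIdx]
      rw [dif_neg (by omega : ¬ k.val + q + j < k.val),
        dif_neg (by omega : ¬ k.val + q + j < k.val + q)]
      have hidx : k.val + q + j - q + 1 = k.val + 1 + j := by omega
      simp only [hidx]
    · simp only [insertArg]
      rw [dif_neg (by omega : ¬ k.val + 1 + j < k.val),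
        dif_neg (by omega : ¬ k.val + 1 + j = k.val)]
      exact congrArg u (Fin.ext (by simp; omega))
  -- middle piece of LHS: single factor equal to monomial b₀ * middle piece of RHS
  have e2 : (∏ j ∈ Finset.range 1, (if h : k.val + j < p then
        Dpow (Function.update as k (0 : Fin n → ℕ) ⟨k.val + j, h⟩)
          (insertArg (elem b₀ bs) k u ⟨k.val + j, h⟩) else 1))
      = monomial (Finsupp.equivFunOnFinite.symm b₀) (1:ℝ) *
        ∏ j ∈ Finset.range q, (if h : k.val + j < p + q - 1 then
          Dpow (spliceIdx k as bs ⟨k.val + j, h⟩) (u ⟨k.val + j, h⟩) else 1) := by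
    rw [Finset.prod_range_one, dif_pos (by omega : k.val + 0 < p)]
    have hkk : (⟨k.val + 0, by omega⟩ : Fin p) = k := Fin.ext (show k.val + 0 = k.val from rfl)
    rw [hkk, Function.update_self]
    rw [Dpow_zero' (0 : Fin n → ℕ) (fun _ => rfl)]
    simp only [insertArg, lt_irrefl, dite_false, dite_eq_ite, if_true]
    rw [dif_pos trivial]
    rw [elem_apply]
    congr 1
    rw [prod_fin_eq_range' (fun t : Fin q => Dpow (bs t)
      (u ⟨k.val + t.val, by have := t.isLt; have := k.isLt; omega⟩))]
    apply Finset.prod_congr rfl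
    intro j hj
    have hj' := Finset.mem_range.mp hj
    rw [dif_pos (by omega : j < q), dif_pos (by omega : k.val + j < p + q - 1)]
    refine Dpow_congr ?_ rfl
    simp only [spliceIdx]
    rw [dif_neg (by omega : ¬ k.val + j < k.val), dif_pos (by omega : k.val + j < k.val + q)]
    have hidx : k.val + j - k.val = j := by omega
    simp only [hidx]
  rw [e1, e3, e2]
  ring

end Aux6
section Aux7
open MvPolynomial
variable {n : ℕ}
local notation "R" => MvPolynomial (Fin n) ℝ

lemma elem_insertArg_reduce {p q : ℕ} (a₀ : Fin n → ℕ) (as : Fin p → Fin n → ℕ)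
    (k : Fin p) (ψ : Cochain R q) :
    (fun u => elem a₀ as (insertArg ψ k u))
      = fun u => elem a₀ (Function.update as k (0 : Fin n → ℕ))
          (insertArg (fun v => Dpow (as k) (ψ v)) k u) := by
  funext u
  simp only [elem_apply]
  congr 1
  apply Finset.prod_congr rfl
  intro s _
  by_cases hs : s = k
  · subst hs
    rw [Function.update_self, Dpow_zero' (0 : Fin n → ℕ) (fun _ => rfl)]
    simp [insertArg]
  · rw [Function.update_of_ne hs]
    congr 1
    have hv : ¬ s.val = k.val := fun hh => hs (Fin.ext hh)
    by_cases h1 : s.val < k.val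
    · simp [insertArg, h1]
    · simp [insertArg, h1, hv]

lemma elem_insert_zero {p q : ℕ} (a₀ : Fin n → ℕ) (as : Fin p → Fin n → ℕ) (k : Fin p) :
    (fun u => elem a₀ as (insertArg (0 : Cochain R q) k u)) = 0 := by
  funext u
  have hz : insertArg (0 : Cochain R q) k u k = 0 := by simp [insertArg]
  rw [elem_apply]
  rw [Finset.prod_eq_zero (Finset.mem_univ k) (by rw [hz]; exact map_zero _)]
  simp

lemma elem_insert_add {p q : ℕ} (a₀ : Fin n → ℕ) (as : Fin p → Fin n → ℕ) (k : Fin p)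
    (G₁ G₂ : Cochain R q) :
    (fun u => elem a₀ as (insertArg (G₁ + G₂) k u))
      = (fun u => elem a₀ as (insertArg G₁ k u)) + fun u => elem a₀ as (insertArg G₂ k u) := by
  funext u
  rw [insertArg_eq_update (G₁ + G₂) G₁ k u]
  have : (G₁ + G₂) (fun j => u ⟨k.val + j.val, by have := j.isLt; have := k.isLt; omega⟩)
      = G₁ (fun j => u ⟨k.val + j.val, by have := j.isLt; have := k.isLt; omega⟩)
        + G₂ (fun j => u ⟨k.val + j.val, by have := j.isLt; have := k.isLt; omega⟩) := rfl
  rw [this, (slotLin_elem a₀ as).add_arg, ← insertArg_eq_update G₁ G₁ k u,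
    ← insertArg_eq_update G₂ G₁ k u]
  rfl

lemma elem_insert_smul {p q : ℕ} (a₀ : Fin n → ℕ) (as : Fin p → Fin n → ℕ) (k : Fin p)
    (c : ℝ) (G : Cochain R q) :
    (fun u => elem a₀ as (insertArg (c • G) k u))
      = c • fun u => elem a₀ as (insertArg G k u) := by
  funext u
  rw [insertArg_eq_update (c • G) G k u]
  have : (c • G) (fun j => u ⟨k.val + j.val, by have := j.isLt; have := k.isLt; omega⟩)
      = c • G (fun j => u ⟨k.val + j.val, by have := j.isLt; have := k.isLt; omega⟩) := rfl
  rw [this, (slotLin_elem a₀ as).smul_arg, ← insertArg_eq_update G G k u]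
  rfl

lemma circ_term_mem {p q : ℕ} (a₀ : Fin n → ℕ) (as : Fin p → Fin n → ℕ) (k : Fin p)
    {wb : Fin n → ℤ} {ψ : Cochain R q} (hψ : ψ ∈ WS n q wb) :
    (fun u => elem a₀ as (insertArg ψ k u)) ∈ WS n (p + q - 1) (wt a₀ as + wb) := by
  rw [elem_insertArg_reduce]
  have hG : (fun v => Dpow (as k) (ψ v)) ∈ WS n q (wb - fun i => ((as k i : ℤ))) :=
    Dpow_comp_mem (as k) hψ
  generalize hGdef : (fun v => Dpow (as k) (ψ v)) = G at hG
  clear hGdef hψ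
  induction hG using Submodule.span_induction with
  | mem x hx =>
    obtain ⟨b₀, bs, hw, rfl⟩ := hx
    rw [splice_eq]
    apply mem_WS_of_gen
    rw [wt_splice, hw]
    funext i
    simp only [Pi.add_apply, Pi.sub_apply]
    ring
  | zero => rw [elem_insert_zero]; exact Submodule.zero_mem _
  | add x y hx hy ihx ihy => rw [elem_insert_add]; exact Submodule.add_mem _ ihx ihy
  | smul c x hx ihx => rw [elem_insert_smul]; exact Submodule.smul_mem _ c ihx

lemma WS_le_CD {p : ℕ} {w : Fin n → ℤ} {S : Set (Fin n → ℤ)} (hw : w ∈ S) :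
    WS n p w ≤ CD n p S := by
  apply Submodule.span_mono
  rintro φ ⟨a₀, as, hwt, rfl⟩
  exact ⟨a₀, as, hwt ▸ hw, rfl⟩

lemma elem_mem_WS {p : ℕ} (a₀ : Fin n → ℕ) (as : Fin p → Fin n → ℕ) :
    elem a₀ as ∈ WS n p (wt a₀ as) := mem_WS_of_gen a₀ as rfl

lemma cup_mem {p q : ℕ} {S1 S2 S3 : Set (Fin n → ℤ)}
    (hadd : ∀ a ∈ S1, ∀ b ∈ S2, a + b ∈ S3)
    {φ : Cochain R p} {ψ : Cochain R q} (hφ : φ ∈ CD n p S1) (hψ : ψ ∈ CD n q S2) :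
    cup φ ψ ∈ CD n (p + q) S3 := by
  induction hφ using Submodule.span_induction with
  | mem x hx =>
    obtain ⟨a₀, as, ha, rfl⟩ := hx
    induction hψ using Submodule.span_induction with
    | mem y hy =>
      obtain ⟨b₀, bs, hb, rfl⟩ := hy
      rw [cup_elem]
      exact WS_le_CD (hadd _ ha _ hb) (mem_WS_of_gen _ _ (wt_append a₀ b₀ as bs))
    | zero =>
      have : cup (elem a₀ as) (0 : Cochain R q) = 0 := by
        funext u; simp [cup]
      rw [this]; exact Submodule.zero_mem _
    | add y z hy hz ihy ihz =>
      have : cup (elem a₀ as) (y + z) = cup (elem a₀ as) y + cup (elem a₀ as) z := by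
        funext u; simp [cup, mul_add]
      rw [this]; exact Submodule.add_mem _ ihy ihz
    | smul c y hy ihy =>
      have : cup (elem a₀ as) (c • y) = c • cup (elem a₀ as) y := by
        funext u; simp [cup, mul_smul_comm]
      rw [this]; exact Submodule.smul_mem _ c ihy
  | zero =>
    have : cup (0 : Cochain R p) ψ = 0 := by funext u; simp [cup]
    rw [this]; exact Submodule.zero_mem _
  | add x y hx hy ihx ihy =>
    have : cup (x + y) ψ = cup x ψ + cup y ψ := by funext u; simp [cup, add_mul]
    rw [this]; exact Submodule.add_mem _ ihx ihy
  | smul c x hx ihx =>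
    have : cup (c • x) ψ = c • cup x ψ := by funext u; simp [cup, smul_mul_assoc]
    rw [this]; exact Submodule.smul_mem _ c ihx

lemma zsmul_mem_sub {p : ℕ} {S : Set (Fin n → ℤ)} (z : ℤ) {x : Cochain R p}
    (hx : x ∈ CD n p S) : z • x ∈ CD n p S := by
  rw [← Int.cast_smul_eq_zsmul ℝ]
  exact Submodule.smul_mem _ _ hx

lemma circ_mem {p q : ℕ} {S1 S2 S3 : Set (Fin n → ℤ)}
    (hadd : ∀ a ∈ S1, ∀ b ∈ S2, a + b ∈ S3)
    {φ : Cochain R p} {ψ : Cochain R q} (hφ : φ ∈ CD n p S1) (hψ : ψ ∈ CD n q S2) :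
    circ φ ψ ∈ CD n (p + q - 1) S3 := by
  induction hφ using Submodule.span_induction with
  | mem x hx =>
    obtain ⟨a₀, as, ha, rfl⟩ := hx
    have hterm : ∀ k : Fin p, (fun u => elem a₀ as (insertArg ψ k u)) ∈ CD n (p + q - 1) S3 := by
      intro k
      induction hψ using Submodule.span_induction with
      | mem y hy =>
        obtain ⟨b₀, bs, hb, rfl⟩ := hy
        exact WS_le_CD (hadd _ ha _ hb) (circ_term_mem a₀ as k (elem_mem_WS b₀ bs))
      | zero => rw [elem_insert_zero]; exact Submodule.zero_mem _
      | add y z hy hz ihy ihz => rw [elem_insert_add]; exact Submodule.add_mem _ ihy ihz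
      | smul c y hy ihy => rw [elem_insert_smul]; exact Submodule.smul_mem _ c ihy
    have hsum : circ (elem a₀ as) ψ
        = ∑ k : Fin p, sgn ((k.val : ℤ) * ((q : ℤ) - 1)) •
            fun u => elem a₀ as (insertArg ψ k u) := by
      funext u
      rw [circ, Finset.sum_apply]
      rfl
    rw [hsum]
    exact Submodule.sum_mem _ fun k _ => zsmul_mem_sub _ (hterm k)
  | zero =>
    have : circ (0 : Cochain R p) ψ = 0 := by
      funext u; simp [circ]
    rw [this]; exact Submodule.zero_mem _
  | add x y hx hy ihx ihy =>
    have : circ (x + y) ψ = circ x ψ + circ y ψ := by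
      funext u; simp [circ, smul_add, Finset.sum_add_distrib]
    rw [this]; exact Submodule.add_mem _ ihx ihy
  | smul c x hx ihx =>
    have : circ (c • x) ψ = c • circ x ψ := by
      funext u
      simp only [circ, Pi.smul_apply, Finset.smul_sum]
      apply Finset.sum_congr rfl
      intro k _
      rw [smul_comm]
    rw [this]; exact Submodule.smul_mem _ c ihx

lemma reindex_mem {m m' : ℕ} (h : m = m') {S : Set (Fin n → ℤ)} {χ : Cochain R m}
    (hχ : χ ∈ CD n m S) :
    (fun (u : Fin m' → R) => χ (fun i => u (Fin.cast h i))) ∈ CD n m' S := by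
  induction hχ using Submodule.span_induction with
  | mem x hx =>
    obtain ⟨a₀, as, ha, rfl⟩ := hx
    apply Submodule.subset_span
    refine ⟨a₀, fun j => as (Fin.cast h.symm j), ?_, ?_⟩
    · have : wt a₀ (fun j => as (Fin.cast h.symm j)) = wt a₀ as := by
        funext i
        simp only [wt]
        congr 1
        exact Fintype.sum_equiv (finCongr h.symm) _ _ (fun j => rfl)
      rw [this]; exact ha
    · funext u
      simp only [elem_apply]
      congr 1
      exact Fintype.prod_equiv (finCongr h) _ _ (fun s => rfl)
  | zero =>
    have : (fun (u : Fin m' → R) => (0 : Cochain R m) (fun i => u (Fin.cast h i))) = 0 := rfl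
    rw [this]; exact Submodule.zero_mem _
  | add x y hx hy ihx ihy =>
    have : (fun (u : Fin m' → R) => (x + y) (fun i => u (Fin.cast h i)))
        = (fun (u : Fin m' → R) => x (fun i => u (Fin.cast h i)))
          + fun (u : Fin m' → R) => y (fun i => u (Fin.cast h i)) := rfl
    rw [this]; exact Submodule.add_mem _ ihx ihy
  | smul c x hx ihx =>
    have : (fun (u : Fin m' → R) => (c • x) (fun i => u (Fin.cast h i)))
        = c • fun (u : Fin m' → R) => x (fun i => u (Fin.cast h i)) := rfl
    rw [this]; exact Submodule.smul_mem _ c ihx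

lemma bracket_mem {p q : ℕ} {S1 S2 S3 : Set (Fin n → ℤ)}
    (hadd : ∀ a ∈ S1, ∀ b ∈ S2, a + b ∈ S3)
    (hadd' : ∀ b ∈ S2, ∀ a ∈ S1, b + a ∈ S3)
    {φ : Cochain R p} {ψ : Cochain R q} (hφ : φ ∈ CD n p S1) (hψ : ψ ∈ CD n q S2) :
    bracket φ ψ ∈ CD n (p + q - 1) S3 := by
  have h1 : circ φ ψ ∈ CD n (p + q - 1) S3 := circ_mem hadd hφ hψ
  have h2 : circ ψ φ ∈ CD n (q + p - 1) S3 := circ_mem hadd' hψ hφ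
  have h3 := reindex_mem (show q + p - 1 = p + q - 1 by omega) h2
  have hb : bracket φ ψ = circ φ ψ - sgn (((p : ℤ) - 1) * ((q : ℤ) - 1)) •
      fun (u : Fin (p + q - 1) → R) => circ ψ φ (fun i => u (Fin.cast (by omega) i)) := rfl
  rw [hb]
  exact Submodule.sub_mem _ h1 (zsmul_mem_sub _ h3)

end Aux7
lemma iterSum_stable {n : ℕ} {Δ : Set (Fin n → ℤ)}
    (hΔ : ∀ a ∈ Δ, ∀ b ∈ Δ, a + b ∈ Δ) {r : ℕ} (hr : 1 ≤ r) :
    ∀ a ∈ Δ, ∀ b ∈ iterSum Δ r, a + b ∈ iterSum Δ r := by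
  intro a ha b hb
  obtain ⟨f, hf, rfl⟩ := hb
  classical
  set i0 : Fin r := ⟨0, hr⟩
  refine ⟨Function.update f i0 (a + f i0), ?_, ?_⟩
  · intro i
    by_cases hi : i = i0
    · subst hi; rw [Function.update_self]; exact hΔ a ha _ (hf i0)
    · rw [Function.update_of_ne hi]; exact hf i
  · have h1 : ∑ i : Fin r, Function.update f i0 (a + f i0) i
        = (a + f i0) + ∑ i ∈ Finset.univ.erase i0, f i := by
      rw [← Finset.add_sum_erase _ _ (Finset.mem_univ i0), Function.update_self]
      congr 1
      exact Finset.sum_congr rfl fun i hi => by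
        rw [Function.update_of_ne (Finset.ne_of_mem_erase hi)]
    have h2 : ∑ i : Fin r, f i = f i0 + ∑ i ∈ Finset.univ.erase i0, f i :=
      (Finset.add_sum_erase _ f (Finset.mem_univ i0)).symm
    rw [h1, h2]
    abel

/-- Proposition 1(i): `I^{(r)}_Δ = ⊕_{a₁,…,a_r∈Δ} C_{a₁+⋯+a_r}`
is an ideal of `C_Δ` for the cup product and the Gerstenhaber bracket. -/
theorem Ir_ideal {n : ℕ} (Δ : Set (Fin n → ℤ))
    (hΔ : ∀ a ∈ Δ, ∀ b ∈ Δ, a + b ∈ Δ) (r : ℕ) (hr : 1 ≤ r) :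
    ∀ (p q : ℕ) (φ : Cochain (MvPolynomial (Fin n) ℝ) p)
      (ψ : Cochain (MvPolynomial (Fin n) ℝ) q),
      φ ∈ CD n p Δ → ψ ∈ CD n q (iterSum Δ r) →
        cup φ ψ ∈ CD n (p + q) (iterSum Δ r) ∧
        cup ψ φ ∈ CD n (q + p) (iterSum Δ r) ∧
        bracket φ ψ ∈ CD n (p + q - 1) (iterSum Δ r) ∧
        bracket ψ φ ∈ CD n (q + p - 1) (iterSum Δ r) := by
  intro p q φ ψ hφ hψ
  have hST : ∀ a ∈ Δ, ∀ b ∈ iterSum Δ r, a + b ∈ iterSum Δ r := iterSum_stable hΔ hr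
  have hTS : ∀ b ∈ iterSum Δ r, ∀ a ∈ Δ, b + a ∈ iterSum Δ r := by
    intro b hb a ha
    rw [add_comm]
    exact hST a ha b hb
  exact ⟨cup_mem hST hφ hψ, cup_mem hTS hψ hφ,
    bracket_mem hST hTS hφ hψ, bracket_mem hTS hST hψ hφ⟩

end Gerst
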